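/- Let n ≥ 1, μ0, μ1 ∈ ℝⁿ, let Σ0, Σ1 be symmetric positive definite real n×n matrices, and define A = Σ0^{−1/2}(Σ0^{1/2} Σ1 Σ0^{1/2})^{1/2} Σ0^{−1/2}, and for s ∈ [0,1] the McCann map T_s(ξ) = (1−s)ξ + s(μ1 + A(ξ − μ0)), the matrix M_s = (1−s)I + sA, and Σ_s = Σ0^{−1/2}((1−s)Σ0 + s(Σ0^{1/2} Σ1 Σ0^{1/2})^{1/2})² Σ0^{−1/2}. Then for every s ∈ [0,1] and every ξ ∈ ℝⁿ, φ(ξ; μ0, Σ0) = φ(T_s(ξ); (1−s)μ0 + sμ1, Σ_s) · det M_s; i.e., the displacement interpolant between the two Gaussian densities is itself Gaussian, with mean (1−s)μ0 + sμ1 and covariance Σ_s. -/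

import Mathlib

open Matrix

/-- Gaussian density on `ℝⁿ`:
`φ(x; μ, Σ) = (2π)^{-n/2} (det Σ)^{-1/2} exp(-(1/2)(x-μ)ᵀ Σ⁻¹ (x-μ))`. -/
noncomputable def gaussianDensity (n : ℕ) (μ : Fin n → ℝ) (Sigma : Matrix (Fin n) (Fin n) ℝ)
    (x : Fin n → ℝ) : ℝ :=
  (2 * Real.pi) ^ (-(n : ℝ) / 2) * Sigma.det ^ (-(1 : ℝ) / 2) *
    Real.exp (-(1 / 2) * ((x - μ) ⬝ᵥ Sigma⁻¹ *ᵥ (x - μ)))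

section Aux

variable {n : ℕ}

lemma mySmulPosSemidef {c : ℝ} {A : Matrix (Fin n) (Fin n) ℝ}
    (hc : 0 ≤ c) (hA : A.PosSemidef) : (c • A).PosSemidef := by
  rw [Matrix.posSemidef_iff_dotProduct_mulVec] at hA ⊢
  refine ⟨?_, fun x => ?_⟩
  · unfold Matrix.IsHermitian
    rw [Matrix.conjTranspose_smul, hA.1.eq]
    simp
  · rw [Matrix.smul_mulVec, dotProduct_smul, smul_eq_mul]
    exact mul_nonneg hc (hA.2 x)

lemma mySmulPosDef {c : ℝ} {A : Matrix (Fin n) (Fin n) ℝ}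
    (hc : 0 < c) (hA : A.PosDef) : (c • A).PosDef := by
  rw [Matrix.posDef_iff_dotProduct_mulVec] at hA ⊢
  refine ⟨?_, fun x hx => ?_⟩
  · unfold Matrix.IsHermitian
    rw [Matrix.conjTranspose_smul, hA.1.eq]
    simp
  · rw [Matrix.smul_mulVec, dotProduct_smul, smul_eq_mul]
    exact mul_pos hc (hA.2 hx)

lemma myPosDefOfDet {A : Matrix (Fin n) (Fin n) ℝ}
    (hA : A.PosSemidef) (hd : A.det ≠ 0) : A.PosDef := by
  have hA' := Matrix.posSemidef_iff_dotProduct_mulVec.mp hA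
  rw [Matrix.posDef_iff_dotProduct_mulVec]
  refine ⟨hA.1, fun x hx => ?_⟩
  rcases lt_or_eq_of_le (hA'.2 x) with h | h
  · exact h
  · exact absurd (Matrix.eq_zero_of_mulVec_eq_zero hd
      ((hA.dotProduct_mulVec_zero_iff x).mp h.symm)) hx

lemma myRpowSq {x : ℝ} (hx : 0 < x) : (x ^ 2 : ℝ) ^ (-(1:ℝ)/2) = x⁻¹ := by
  rw [← Real.rpow_natCast x 2, ← Real.rpow_mul hx.le]
  norm_num
  rw [Real.rpow_neg_one]

lemma mySymmTrans {A : Matrix (Fin n) (Fin n) ℝ} (hA : A.IsHermitian) : Aᵀ = A := by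
  rw [← Matrix.conjTranspose_eq_transpose_of_trivial]
  exact hA.eq

end Aux

/-- with `A = Sigma0^{-1/2}(Sigma0^{1/2} Sigma1 Sigma0^{1/2})^{1/2} Sigma0^{-1/2}`
(square roots characterized as the unique symmetric positive semidefinite square roots), the
McCann map `Tₛ ξ = (1-s)ξ + s(μ1 + A(ξ-μ0))`, the matrix `Mₛ = (1-s)I + sA`, and the covariance
`Σₛ = Sigma0^{-1/2}((1-s)Sigma0 + s(Sigma0^{1/2} Sigma1 Sigma0^{1/2})^{1/2})² Sigma0^{-1/2}`,
for every `s ∈ [0,1]` and every `ξ ∈ ℝⁿ`,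
`φ(ξ; μ0, Sigma0) = φ(Tₛ ξ; (1-s)μ0 + sμ1, Σₛ) · det Mₛ`: the displacement interpolant of two
Gaussians is Gaussian with mean `(1-s)μ0 + sμ1` and covariance `Σₛ`. -/
theorem gaussian_displacement_interpolant_is_gaussian
    (n : ℕ) (hn : 1 ≤ n) (μ0 μ1 : Fin n → ℝ)
    (Sigma0 Sigma1 : Matrix (Fin n) (Fin n) ℝ) (hSigma0 : Sigma0.PosDef)
    (hSigma1 : Sigma1.PosDef)
    (S0 : Matrix (Fin n) (Fin n) ℝ) (hS0 : S0.PosSemidef) (hS0sq : S0 ^ 2 = Sigma0)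
    (M : Matrix (Fin n) (Fin n) ℝ) (hM : M.PosSemidef) (hMsq : M ^ 2 = S0 * Sigma1 * S0)
    (A : Matrix (Fin n) (Fin n) ℝ) (hA : A = S0⁻¹ * M * S0⁻¹)
    (T : ℝ → (Fin n → ℝ) → (Fin n → ℝ))
    (hT : ∀ s ξ, T s ξ = (1 - s) • ξ + s • (μ1 + A *ᵥ (ξ - μ0)))
    (Ms Sigmas : ℝ → Matrix (Fin n) (Fin n) ℝ)
    (hMs : ∀ s, Ms s = (1 - s) • (1 : Matrix (Fin n) (Fin n) ℝ) + s • A)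
    (hSigmas : ∀ s, Sigmas s = S0⁻¹ * ((1 - s) • Sigma0 + s • M) ^ 2 * S0⁻¹) :
    ∀ s ∈ Set.Icc (0:ℝ) 1, ∀ ξ : Fin n → ℝ,
      gaussianDensity n μ0 Sigma0 ξ
        = gaussianDensity n ((1 - s) • μ0 + s • μ1) (Sigmas s) (T s ξ) * (Ms s).det := by
  intro s hs ξ
  obtain ⟨hs0, hs1⟩ := hs
  have hS0sq' : S0 * S0 = Sigma0 := by rw [← hS0sq, pow_two]
  have hMsq' : M * M = S0 * Sigma1 * S0 := by rw [← hMsq, pow_two]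
  have hdetSig0 : 0 < Sigma0.det := hSigma0.det_pos
  have hd0 : S0.det ≠ 0 := by
    intro h
    rw [← hS0sq', Matrix.det_mul, h, mul_zero] at hdetSig0
    exact lt_irrefl _ hdetSig0
  have hS0pd : S0.PosDef := myPosDefOfDet hS0 hd0
  have hd0pos : 0 < S0.det := hS0pd.det_pos
  have hdM : M.det ≠ 0 := by
    intro h
    have : (M * M).det = 0 := by rw [Matrix.det_mul, h, mul_zero]
    rw [hMsq', Matrix.det_mul, Matrix.det_mul] at this
    have h1 := hSigma1.det_pos
    have : (0:ℝ) < S0.det * Sigma1.det * S0.det := by positivity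
    simp_all
  have hMpd : M.PosDef := myPosDefOfDet hM hdM
  set B : Matrix (Fin n) (Fin n) ℝ := (1 - s) • Sigma0 + s • M with hB
  have hBpd : B.PosDef := by
    rcases eq_or_lt_of_le hs1 with h | h
    · have : (1 : ℝ) - s = 0 := by rw [← h]; ring
      rw [hB, this, zero_smul, zero_add, h, one_smul]
      exact hMpd
    · exact (mySmulPosDef (by linarith) hSigma0).add_posSemidef
        (mySmulPosSemidef hs0 hMpd.posSemidef)
  have hdB : 0 < B.det := hBpd.det_pos
  have hdBne : B.det ≠ 0 := ne_of_gt hdB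
  have hS0u : IsUnit S0.det := isUnit_iff_ne_zero.mpr hd0
  have hBu : IsUnit B.det := isUnit_iff_ne_zero.mpr hdBne
  have h1 : S0 * S0⁻¹ = 1 := Matrix.mul_nonsing_inv _ hS0u
  have h2 : S0⁻¹ * S0 = 1 := Matrix.nonsing_inv_mul _ hS0u
  have hB1 : B * B⁻¹ = 1 := Matrix.mul_nonsing_inv _ hBu
  have hB2 : B⁻¹ * B = 1 := Matrix.nonsing_inv_mul _ hBu
  have h1' : ∀ X : Matrix (Fin n) (Fin n) ℝ, S0 * (S0⁻¹ * X) = X := fun X => by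
    rw [← Matrix.mul_assoc, h1, Matrix.one_mul]
  have h2' : ∀ X : Matrix (Fin n) (Fin n) ℝ, S0⁻¹ * (S0 * X) = X := fun X => by
    rw [← Matrix.mul_assoc, h2, Matrix.one_mul]
  have hB1' : ∀ X : Matrix (Fin n) (Fin n) ℝ, B * (B⁻¹ * X) = X := fun X => by
    rw [← Matrix.mul_assoc, hB1, Matrix.one_mul]
  have hB2' : ∀ X : Matrix (Fin n) (Fin n) ℝ, B⁻¹ * (B * X) = X := fun X => by
    rw [← Matrix.mul_assoc, hB2, Matrix.one_mul]
  -- Ms s = S0⁻¹ * B * S0⁻¹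
  have e1 : S0⁻¹ * Sigma0 * S0⁻¹ = 1 := by
    rw [← hS0sq']
    simp only [Matrix.mul_assoc, h1, Matrix.mul_one, h2]
  have hMsEq : Ms s = S0⁻¹ * B * S0⁻¹ := by
    have e2 : S0⁻¹ * B * S0⁻¹
        = (1 - s) • (S0⁻¹ * Sigma0 * S0⁻¹) + s • (S0⁻¹ * M * S0⁻¹) := by
      rw [hB]
      simp only [Matrix.mul_add, Matrix.add_mul, Matrix.mul_smul, Matrix.smul_mul]
    rw [hMs, hA, e2, e1]
  -- Sigmas s = S0⁻¹ * B^2 * S0⁻¹, inverse: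
  have hSigEq : Sigmas s = S0⁻¹ * (B * B) * S0⁻¹ := by rw [hSigmas, ← hB, pow_two]
  have hSigInv : (Sigmas s)⁻¹ = S0 * (B⁻¹ * B⁻¹) * S0 := by
    apply Matrix.inv_eq_right_inv
    rw [hSigEq]
    simp only [Matrix.mul_assoc, h2', hB1', h1', hB2']
    rw [h2]
  -- symmetry
  have hS0T : S0ᵀ = S0 := mySymmTrans hS0.1
  have hBT : Bᵀ = B := mySymmTrans hBpd.1
  have hS0iT : (S0⁻¹)ᵀ = S0⁻¹ := by rw [Matrix.transpose_nonsing_inv, hS0T]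
  have hMsT : (Ms s)ᵀ = Ms s := by
    rw [hMsEq, Matrix.transpose_mul, Matrix.transpose_mul, hS0iT, hBT, Matrix.mul_assoc]
  -- key quadratic identity
  have hKey : (Ms s)ᵀ * ((Sigmas s)⁻¹ * Ms s) = Sigma0⁻¹ := by
    rw [hMsT, hMsEq, hSigInv, ← hS0sq', Matrix.mul_inv_rev]
    simp only [Matrix.mul_assoc, h2', hB1', h1', hB2']
  -- mean shift
  have hshift : T s ξ - ((1 - s) • μ0 + s • μ1) = (Ms s) *ᵥ (ξ - μ0) := by
    rw [hT, hMs, Matrix.add_mulVec, Matrix.smul_mulVec, Matrix.smul_mulVec,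
      Matrix.one_mulVec]
    module
  -- quadratic form equality
  have hquad : (T s ξ - ((1 - s) • μ0 + s • μ1)) ⬝ᵥ (Sigmas s)⁻¹ *ᵥ
      (T s ξ - ((1 - s) • μ0 + s • μ1)) = (ξ - μ0) ⬝ᵥ Sigma0⁻¹ *ᵥ (ξ - μ0) := by
    rw [hshift, ← hKey]
    rw [← Matrix.mulVec_mulVec, ← Matrix.mulVec_mulVec]
    rw [Matrix.dotProduct_mulVec (ξ - μ0) (Ms s)ᵀ, Matrix.vecMul_transpose]
  -- determinants
  have hdet0 : Sigma0.det = S0.det ^ 2 := by rw [← hS0sq', Matrix.det_mul, sq]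
  have hdetinv : (S0⁻¹).det = (S0.det)⁻¹ := by
    rw [Matrix.det_nonsing_inv, Ring.inverse_eq_inv']
  have hdetSig : (Sigmas s).det = (B.det * (S0.det)⁻¹) ^ 2 := by
    rw [hSigEq, Matrix.det_mul, Matrix.det_mul, Matrix.det_mul, hdetinv]
    ring
  have hdetMs : (Ms s).det = B.det * ((S0.det)⁻¹ * (S0.det)⁻¹) := by
    rw [hMsEq, Matrix.det_mul, Matrix.det_mul, hdetinv]
    ring
  have hBd0pos : 0 < B.det * (S0.det)⁻¹ := mul_pos hdB (inv_pos.mpr hd0pos)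
  -- final determinant identity for rpow
  have hdetfin : Sigma0.det ^ (-(1:ℝ)/2)
      = (Sigmas s).det ^ (-(1:ℝ)/2) * (Ms s).det := by
    rw [hdet0, hdetSig, hdetMs, myRpowSq hd0pos, myRpowSq hBd0pos]
    field_simp
  rw [gaussianDensity, gaussianDensity, hquad, hdetfin]
  ring
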